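/- arXiv:2212.05325 — 2 statements merged into one kernel-verified Lean document; each statement's English description precedes it below -/
import Mathlib

section
/- Let μ be a probability measure on G = (ℤ/2ℤ)³ with a_max = μ({0}) and a_max ≤ 1/4. Suppose there is a decomposition G = X₁ ⊕ X₂ (X₁ ∈ 𝔄₁, X₂ ∈ 𝔄₂, X₁ ∩ X₂ = {0}) such that: (I.1) μ(x + X₁) = 1/4 for every x ∈ X₂; and (I.2b) there is a two-element subset E ⊆ X₂ with μ(E) = μ(X₂ \ E). Then μ ∈ TEC(G). -/
open scoped BigOperators

/-- The group `G = (ℤ/2ℤ)³`. -/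
abbrev G : Type := ZMod 2 × ZMod 2 × ZMod 2

/-- The character pairing `(x,y) = (-1)^(x₁y₁+x₂y₂+x₃y₃)`. -/
noncomputable def pairing (x y : G) : ℝ :=
  (-1 : ℝ) ^ (x.1.val * y.1.val + x.2.1.val * y.2.1.val + x.2.2.val * y.2.2.val)

/-- A probability measure on `G`, given by its mass function. -/
def IsProb (p : G → ℝ) : Prop := (∀ x, 0 ≤ p x) ∧ ∑ x : G, p x = 1

/-- The characteristic function `μ̂(y) = Σ_x (x,y) μ({x})`. -/
noncomputable def charFn (p : G → ℝ) (y : G) : ℝ := ∑ x : G, pairing x y * p x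

/-- The measure of a set `E ⊆ G`. -/
noncomputable def measOf (p : G → ℝ) (E : Set G) : ℝ := ∑ x : G, E.indicator p x

/-- `μ` has a trivial equivalence class: every probability measure `ν` with
`|ν̂| = |μ̂|` is a shift `μₓ` of `μ` (central symmetry is the identity on `G`). -/
def TEC (p : G → ℝ) : Prop :=
  ∀ q : G → ℝ, IsProb q → (∀ y : G, |charFn q y| = |charFn p y|) →
    ∃ x : G, ∀ e : G, q e = p (e + x)

/-- `u(E) = max_{x ∈ E} μ({x})`. -/
noncomputable def uOf (p : G → ℝ) (E : Set G) : ℝ := sSup (p '' E)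

/-- `v(E) = min_{x ∈ E} μ({x})`. -/
noncomputable def vOf (p : G → ℝ) (E : Set G) : ℝ := sInf (p '' E)

/-- `μ ∈ U(E)` iff `2 u(E) > μ(E)`. -/
def USet (p : G → ℝ) (E : Set G) : Prop := measOf p E < 2 * uOf p E

/-- `μ ∈ V(E)` iff `1/2 + 2 v(E) < μ(E)`. -/
def VSet (p : G → ℝ) (E : Set G) : Prop := 1/2 + 2 * vOf p E < measOf p E

-- ===== auxiliary machinery =====
section Aux

/-- The bilinear form on `G` with values in `ZMod 2`. -/
def bform (x y : G) : ZMod 2 := x.1*y.1 + x.2.1*y.2.1 + x.2.2*y.2.2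

lemma val2' : (2 : ZMod 2).val = 0 := rfl
lemma val3' : (3 : ZMod 2).val = 1 := rfl

lemma pairing_eq (x y : G) : pairing x y = (-1 : ℝ) ^ (bform x y).val := by
  obtain ⟨x1, x2, x3⟩ := x
  obtain ⟨y1, y2, y3⟩ := y
  fin_cases x1 <;> fin_cases x2 <;> fin_cases x3 <;> fin_cases y1 <;> fin_cases y2 <;>
    fin_cases y3 <;> norm_num [pairing, bform, ZMod.val_one, val2', val3'] <;>
    rw [neg_one_pow_eq_pow_mod_two] <;> rfl

lemma bform_add_left (x z y : G) : bform (x + z) y = bform x y + bform z y := by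
  obtain ⟨x1, x2, x3⟩ := x; obtain ⟨z1, z2, z3⟩ := z
  simp only [bform, Prod.fst_add, Prod.snd_add]
  ring

lemma bform_add_right (x z y : G) : bform x (z + y) = bform x z + bform x y := by
  obtain ⟨z1, z2, z3⟩ := z; obtain ⟨y1, y2, y3⟩ := y
  simp only [bform, Prod.fst_add, Prod.snd_add]
  ring

lemma bform_zero_left (y : G) : bform 0 y = 0 := by simp [bform]
lemma bform_zero_right (x : G) : bform x 0 = 0 := by simp [bform]

lemma neg_one_pow_zmod_add (s t : ZMod 2) :
    ((-1 : ℝ)) ^ (s + t).val = (-1 : ℝ) ^ s.val * (-1 : ℝ) ^ t.val := by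
  fin_cases s <;> fin_cases t <;> norm_num [ZMod.val_one, val2', val3'] <;>
    rw [← pow_add, neg_one_pow_eq_pow_mod_two] <;> conv_rhs => rw [neg_one_pow_eq_pow_mod_two]
  all_goals rfl

lemma pairing_add_left (x z y : G) : pairing (x + z) y = pairing x y * pairing z y := by
  rw [pairing_eq, pairing_eq, pairing_eq, bform_add_left, neg_one_pow_zmod_add]

lemma pairing_add_right (x z y : G) : pairing x (z + y) = pairing x z * pairing x y := by
  rw [pairing_eq, pairing_eq, pairing_eq, bform_add_right, neg_one_pow_zmod_add]

lemma pairing_zero_right (x : G) : pairing x 0 = 1 := by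
  rw [pairing_eq, bform_zero_right]; norm_num

lemma pairing_zero_left (y : G) : pairing 0 y = 1 := by
  rw [pairing_eq, bform_zero_left]; norm_num

lemma exists_bform_one : ∀ z : G, z ≠ 0 → ∃ y, bform z y = 1 := by decide

lemma Gselfadd : ∀ x : G, x + x = 0 := by decide

lemma Gadd_eq_zero : ∀ x y : G, x + y = 0 ↔ x = y := by decide

lemma zmod2cases : ∀ s : ZMod 2, s = 0 ∨ s = 1 := by decide

lemma cardG8 : Fintype.card G = 8 := by decide

set_option synthInstance.maxSize 2000 in
set_option synthInstance.maxHeartbeats 1000000 in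
set_option maxHeartbeats 4000000 in
lemma lemF : ∀ g a b : G, a ≠ 0 → b ≠ 0 → a ≠ b → g ≠ 0 → g ≠ a → g ≠ b → g ≠ a + b →
    ∀ y : G, y ≠ 0 → bform g y = 0 → bform a y = 0 → bform b y = 0 → False := by decide

set_option synthInstance.maxSize 2000 in
set_option synthInstance.maxHeartbeats 1000000 in
set_option maxHeartbeats 4000000 in
lemma lemD0 : ∀ g w₁ : G, bform g w₁ = 1 → ∀ w₂ : G, bform g w₂ = 1 → w₁ ≠ w₂ →
    ∀ w₃ : G, bform g w₃ = 1 → w₁ ≠ w₃ → w₂ ≠ w₃ →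
    ∃ x : G, bform x w₁ = 1 ∧ bform x w₂ = 0 ∧ bform x w₃ = 0 := by decide

set_option synthInstance.maxSize 2000 in
set_option synthInstance.maxHeartbeats 1000000 in
set_option maxHeartbeats 4000000 in
lemma lemE : ∀ g a b : G, a ≠ 0 → b ≠ 0 → a ≠ b → g ≠ 0 → g ≠ a → g ≠ b → g ≠ a + b →
    ∃ y : G, bform g y = 1 ∧ bform a y = 0 ∧ bform b y = 1 := by decide

lemma card4 : ∀ g : G, g ≠ 0 →
    (Finset.univ.filter (fun y => bform g y = 1)).card = 4 := by decide

lemma sum_pairing (z : G) : ∑ y : G, pairing z y = if z = 0 then 8 else 0 := by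
  split_ifs with h
  · subst h
    simp [pairing_zero_left, Finset.sum_const, cardG8]
  · obtain ⟨y₀, hy₀⟩ := exists_bform_one z h
    have h1 : ∑ y : G, pairing z (y₀ + y) = ∑ y : G, pairing z y :=
      Fintype.sum_equiv (Equiv.addLeft y₀) _ _ (fun y => rfl)
    have h2 : ∀ y : G, pairing z (y₀ + y) = - pairing z y := by
      intro y
      rw [pairing_add_right, pairing_eq z y₀, hy₀, ZMod.val_one]
      ring
    rw [Finset.sum_congr rfl (fun y _ => h2 y), Finset.sum_neg_distrib] at h1
    linarith

lemma sum_pairing_mul (r : G → ℝ) (z : G) :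
    ∑ y : G, pairing z y * charFn r y = 8 * r z := by
  unfold charFn
  calc ∑ y : G, pairing z y * ∑ x : G, pairing x y * r x
      = ∑ y : G, ∑ x : G, pairing (z + x) y * r x := by
        refine Finset.sum_congr rfl (fun y _ => ?_)
        rw [Finset.mul_sum]
        exact Finset.sum_congr rfl (fun x _ => by rw [pairing_add_left]; ring)
    _ = ∑ x : G, (∑ y : G, pairing (z + x) y) * r x := by
        rw [Finset.sum_comm]
        exact Finset.sum_congr rfl (fun x _ => by rw [Finset.sum_mul])
    _ = ∑ x : G, (if x = z then (8:ℝ) else 0) * r x := by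
        refine Finset.sum_congr rfl (fun x _ => ?_)
        rw [sum_pairing]
        congr 1
        have hiff : z + x = 0 ↔ x = z := by
          rw [Gadd_eq_zero]; exact eq_comm
        simp [hiff]
    _ = 8 * r z := by
        simp [ite_mul, Finset.sum_ite_eq']

lemma measOf_pair (p : G → ℝ) {s t : G} (h : s ≠ t) : measOf p {s, t} = p s + p t := by
  classical
  have h1 : ∀ x : G, ({s, t} : Set G).indicator p x = if x ∈ ({s, t} : Finset G) then p x else 0 := by
    intro x
    rw [Set.indicator_apply]
    congr 1
    simp
  rw [measOf, Finset.sum_congr rfl (fun x _ => h1 x), Finset.sum_ite_mem,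
    Finset.univ_inter, Finset.sum_pair h]

lemma charFn_zero_eq_one (r : G → ℝ) (hr : ∑ x : G, r x = 1) : charFn r 0 = 1 := by
  unfold charFn
  rw [Finset.sum_congr rfl (fun x _ => by rw [pairing_zero_right, one_mul])]
  exact hr

end Aux

/-- `a_max = μ({0}) ≤ 1/4`, with a decomposition `G = X₁ ⊕ X₂` satisfying
I.1 and I.2(b), implies `μ ∈ TEC(G)`. -/
theorem stmt1 (p : G → ℝ) (hp : IsProb p)
    (hmax : ∀ x : G, p x ≤ p 0) (hle : p 0 ≤ 1/4)
    (X₁ X₂ : AddSubgroup G) (hX₁ : Nat.card X₁ = 2) (hX₂ : Nat.card X₂ = 4)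
    (hinf : X₁ ⊓ X₂ = ⊥) (hsup : X₁ ⊔ X₂ = ⊤)
    (hI1 : ∀ x ∈ X₂, measOf p ((x + ·) '' (X₁ : Set G)) = 1/4)
    (hI2b : ∃ E ⊆ (X₂ : Set G), E.ncard = 2 ∧
      measOf p E = measOf p ((X₂ : Set G) \ E)) :
    TEC p := by
  classical
  intro q hq hqp
  -- extract the generator g of X₁
  obtain ⟨g, hg0, hgmem⟩ : ∃ g : G, g ≠ 0 ∧ ∀ w : G, w ∈ X₁ ↔ (w = 0 ∨ w = g) := by
    have hTcard : (X₁ : Set G).toFinset.card = 2 := by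
      rw [Set.toFinset_card, ← Nat.card_eq_fintype_card]
      exact hX₁
    obtain ⟨u, v, huv, hTuv⟩ := Finset.card_eq_two.mp hTcard
    have hmemT : ∀ w : G, w ∈ X₁ ↔ (w = u ∨ w = v) := by
      intro w
      rw [← SetLike.mem_coe, ← Set.mem_toFinset, hTuv]
      simp
    have h0T : (0:G) = u ∨ (0:G) = v := (hmemT 0).mp (zero_mem X₁)
    rcases h0T with h | h
    · refine ⟨v, by rw [← h] at huv; exact fun hv => huv hv.symm, fun w => ?_⟩
      rw [hmemT w, ← h]
    · refine ⟨u, by rw [← h] at huv; exact fun hu => huv hu, fun w => ?_⟩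
      rw [hmemT w, ← h]
      exact or_comm
  -- the finset of X₂
  set S : Finset G := (X₂ : Set G).toFinset with hSdef
  have hSmem : ∀ w : G, w ∈ S ↔ w ∈ X₂ := by
    intro w; rw [hSdef, Set.mem_toFinset]; rfl
  have hScard : S.card = 4 := by
    rw [hSdef, Set.toFinset_card, ← Nat.card_eq_fintype_card]
    exact hX₂
  have hgX₂ : g ∉ X₂ := by
    intro h
    have : g ∈ X₁ ⊓ X₂ := ⟨(hgmem g).mpr (Or.inr rfl), h⟩
    rw [hinf, AddSubgroup.mem_bot] at this
    exact hg0 this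
  -- coset masses
  have hcoset : ∀ t : G, t ∈ X₂ → p t + p (t + g) = 1/4 := by
    intro t ht
    have h1 := hI1 t ht
    have himg : ((t + ·) '' (X₁ : Set G)) = {t, t + g} := by
      ext w
      constructor
      · rintro ⟨z, hz, rfl⟩
        rcases (hgmem z).mp hz with rfl | rfl
        · left; exact add_zero _
        · right; rfl
      · rintro (rfl | rfl)
        · exact ⟨0, (hgmem 0).mpr (Or.inl rfl), add_zero _⟩
        · exact ⟨g, (hgmem g).mpr (Or.inr rfl), rfl⟩
    have hne : t ≠ t + g := by
      intro h
      exact hg0 (left_eq_add.mp h)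
    rw [himg, measOf_pair p hne] at h1
    exact h1
  -- decomposition of sums over G
  have hdisj : Disjoint S (S.image (· + g)) := by
    rw [Finset.disjoint_left]
    intro t htS htimg
    obtain ⟨t', ht'S, h⟩ := Finset.mem_image.mp htimg
    apply hgX₂
    have hg : g = t' + t := by
      have := congrArg (HAdd.hAdd t') h
      rwa [← add_assoc, Gselfadd, zero_add] at this
    rw [hg]
    exact add_mem ((hSmem t').mp ht'S) ((hSmem t).mp htS)
  have hunion : S ∪ S.image (· + g) = Finset.univ := by
    apply Finset.eq_univ_of_card
    rw [Finset.card_union_of_disjoint hdisj,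
      Finset.card_image_of_injective _ (add_left_injective g), hScard, cardG8]
  have hdecomp : ∀ F : G → ℝ, ∑ x : G, F x = ∑ t ∈ S, F t + ∑ t ∈ S, F (t + g) := by
    intro F
    calc ∑ x : G, F x = ∑ x ∈ S ∪ S.image (· + g), F x := by rw [hunion]
      _ = ∑ t ∈ S, F t + ∑ t ∈ S.image (· + g), F t := Finset.sum_union hdisj
      _ = ∑ t ∈ S, F t + ∑ t ∈ S, F (t + g) := by
          rw [Finset.sum_image (fun x _ y _ h => add_left_injective g h)]
  -- the two-element set E
  obtain ⟨E, hEX₂, hE2, hEeq⟩ := hI2b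
  obtain ⟨e₁, e₂, hee, rfl⟩ := Set.ncard_eq_two.mp hE2
  have he₁X₂ : e₁ ∈ X₂ := hEX₂ (Set.mem_insert _ _)
  have he₂X₂ : e₂ ∈ X₂ := hEX₂ (Set.mem_insert_iff.mpr (Or.inr rfl))
  obtain ⟨a, hadef⟩ : ∃ a : G, a = e₁ + e₂ := ⟨_, rfl⟩
  have haX₂ : a ∈ X₂ := by rw [hadef]; exact add_mem he₁X₂ he₂X₂
  have ha0 : a ≠ 0 := by rw [hadef]; exact fun h => hee ((Gadd_eq_zero e₁ e₂).mp h)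
  have he₂a : e₂ = e₁ + a := by
    rw [hadef, ← add_assoc, Gselfadd, zero_add]
  -- choose b
  obtain ⟨b, hbS, hb0, hba⟩ : ∃ b : G, b ∈ S ∧ b ≠ 0 ∧ a ≠ b := by
    by_contra hcon
    push_neg at hcon
    have hsub : S ⊆ ({0, a} : Finset G) := by
      intro w hw
      rcases eq_or_ne w 0 with rfl | hw0
      · simp
      · rcases eq_or_ne w a with rfl | hwa
        · simp
        · exact absurd (hcon w hw hw0).symm hwa
    have := Finset.card_le_card hsub
    rw [hScard] at this
    have h2 : ({0, a} : Finset G).card ≤ 2 := Finset.card_insert_le _ _ |>.trans (by simp)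
    omega
  have hbX₂ : b ∈ X₂ := (hSmem b).mp hbS
  have habX₂ : a + b ∈ X₂ := add_mem haX₂ hbX₂
  have hab0 : a + b ≠ 0 := fun h => hba ((Gadd_eq_zero a b).mp h)
  have haba : a + b ≠ a := by
    intro h
    exact hb0 (by rwa [add_eq_left] at h)
  have habb : a + b ≠ b := by
    intro h
    exact ha0 (by rwa [add_eq_right] at h)
  -- enumeration of S
  have hSfin : S = ({0, a, b, a + b} : Finset G) := by
    symm
    apply Finset.eq_of_subset_of_card_le
    · intro w hw
      simp only [Finset.mem_insert, Finset.mem_singleton] at hw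
      rcases hw with rfl | h | h | h
      · exact (hSmem 0).mpr (zero_mem X₂)
      · rw [h]; exact (hSmem a).mpr haX₂
      · rw [h]; exact (hSmem b).mpr hbX₂
      · rw [h]; exact (hSmem (a+b)).mpr habX₂
    · rw [hScard]
      rw [Finset.card_insert_of_notMem (by simp [ha0.symm, hb0.symm, hab0.symm]),
        Finset.card_insert_of_notMem (by simp [hba, haba.symm]),
        Finset.card_insert_of_notMem (by simp [habb.symm]),
        Finset.card_singleton]
  have hsum4 : ∀ f : G → ℝ, ∑ t ∈ S, f t = f 0 + f a + f b + f (a + b) := by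
    intro f
    rw [hSfin]
    rw [show ({0, a, b, a+b} : Finset G) = insert 0 (insert a (insert b {a+b})) from rfl,
      Finset.sum_insert (by simp [ha0.symm, hb0.symm, hab0.symm]),
      Finset.sum_insert (by simp [hba, haba.symm]),
      Finset.sum_insert (by simp [habb.symm]),
      Finset.sum_singleton]
    ring
  have hSmem4 : ∀ w : G, w ∈ X₂ ↔ (w = 0 ∨ w = a ∨ w = b ∨ w = a + b) := by
    intro w
    rw [← hSmem, hSfin]
    simp
  -- the key equality from I.2b
  have hkey : p 0 + p a = p b + p (a + b) := by
    have hcompl1 : (X₂ : Set G) \ {0, a} = {b, a + b} := by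
      ext w
      simp only [Set.mem_diff, SetLike.mem_coe, hSmem4, Set.mem_insert_iff,
        Set.mem_singleton_iff]
      constructor
      · rintro ⟨rfl | rfl | rfl | rfl, hn⟩
        · exact absurd (Or.inl rfl) hn
        · exact absurd (Or.inr rfl) hn
        · exact Or.inl rfl
        · exact Or.inr rfl
      · rintro (rfl | rfl)
        · exact ⟨Or.inr (Or.inr (Or.inl rfl)), by push_neg; exact ⟨hb0, hba.symm⟩⟩
        · exact ⟨Or.inr (Or.inr (Or.inr rfl)), by push_neg; exact ⟨hab0, haba⟩⟩
    have hcompl2 : (X₂ : Set G) \ {b, a + b} = {0, a} := by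
      ext w
      simp only [Set.mem_diff, SetLike.mem_coe, hSmem4, Set.mem_insert_iff,
        Set.mem_singleton_iff]
      constructor
      · rintro ⟨rfl | rfl | rfl | rfl, hn⟩
        · exact Or.inl rfl
        · exact Or.inr rfl
        · exact absurd (Or.inl rfl) hn
        · exact absurd (Or.inr rfl) hn
      · rintro (rfl | rfl)
        · exact ⟨Or.inl rfl, by push_neg; exact ⟨hb0.symm, hab0.symm⟩⟩
        · exact ⟨Or.inr (Or.inl rfl), by push_neg; exact ⟨hba, haba.symm⟩⟩
    have hEcase : ({e₁, e₂} : Set G) = {0, a} ∨ ({e₁, e₂} : Set G) = {b, a + b} := by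
      rcases eq_or_ne e₁ 0 with rfl | h10
      · left
        rw [he₂a, zero_add]
      · rcases eq_or_ne e₂ 0 with rfl | h20
        · left
          rw [show a = e₁ from by rw [hadef, add_zero]]
          exact Set.pair_comm e₁ 0
        · have h1a : e₁ ≠ a := by
            intro h
            apply h20
            rw [he₂a, ← h, Gselfadd]
          rcases (hSmem4 e₁).mp he₁X₂ with h | h | h | h
          · exact absurd h h10
          · exact absurd h h1a
          · right
            rw [he₂a, h, add_comm b a]
          · right
            rw [he₂a, h, show a + b + a = b from by
              rw [add_comm a b, add_assoc, Gselfadd, add_zero]]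
            exact Set.pair_comm (a+b) b
    rcases hEcase with h | h
    · rw [h, hcompl1, measOf_pair p ha0.symm, measOf_pair p habb.symm] at hEeq
      linarith [hEeq]
    · rw [h, hcompl2, measOf_pair p habb.symm, measOf_pair p ha0.symm] at hEeq
      linarith [hEeq]
  -- construct y₁
  have hga : g ≠ a := fun h => hgX₂ (by rw [h]; exact haX₂)
  have hgb : g ≠ b := fun h => hgX₂ (by rw [h]; exact hbX₂)
  have hgab : g ≠ a + b := fun h => hgX₂ (by rw [h]; exact habX₂)
  obtain ⟨y₁, hgy₁, hay₁, hby₁⟩ := lemE g a b ha0 hb0 hba hg0 hga hgb hgab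
  -- vanishing on X₁-perp minus 0
  have hV1 : ∀ y : G, y ≠ 0 → bform g y = 0 → charFn p y = 0 := by
    intro y hy hgy
    have hpg : pairing g y = 1 := by rw [pairing_eq, hgy]; norm_num
    have h1 : charFn p y = ∑ t ∈ S, pairing t y * (p t + p (t + g)) := by
      rw [charFn, hdecomp (fun x => pairing x y * p x)]
      have hrw : ∀ t ∈ S, pairing (t + g) y * p (t + g) = pairing t y * p (t + g) :=
        fun t _ => by rw [pairing_add_left, hpg, mul_one]
      rw [Finset.sum_congr rfl hrw, ← Finset.sum_add_distrib]
      exact Finset.sum_congr rfl (fun t _ => by ring)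
    have h2 : charFn p y = (1/4) * ∑ t ∈ S, pairing t y := by
      rw [h1, Finset.mul_sum]
      refine Finset.sum_congr rfl (fun t ht => ?_)
      rw [hcoset t ((hSmem t).mp ht)]
      ring
    have h3 : ∑ t ∈ S, pairing t y
        = 1 + pairing a y + pairing b y + pairing a y * pairing b y := by
      rw [hsum4 (fun t => pairing t y), pairing_zero_left, pairing_add_left]
    rcases zmod2cases (bform a y) with hay | hay
    · rcases zmod2cases (bform b y) with hby | hby
      · exact (lemF g a b ha0 hb0 hba hg0 hga hgb hgab y hy hgy hay hby).elim
      · have : pairing a y = 1 := by rw [pairing_eq, hay]; norm_num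
        have hbv : pairing b y = -1 := by rw [pairing_eq, hby, ZMod.val_one]; norm_num
        rw [h2, h3, this, hbv]; ring
    · have hav : pairing a y = -1 := by rw [pairing_eq, hay, ZMod.val_one]; norm_num
      rw [h2, h3, hav]; ring
  -- vanishing at y₁
  have hV2 : charFn p y₁ = 0 := by
    have hpg : pairing g y₁ = -1 := by rw [pairing_eq, hgy₁, ZMod.val_one]; norm_num
    have hpa : pairing a y₁ = 1 := by rw [pairing_eq, hay₁]; norm_num
    have hpb : pairing b y₁ = -1 := by rw [pairing_eq, hby₁, ZMod.val_one]; norm_num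
    have hpab : pairing (a + b) y₁ = -1 := by
      rw [pairing_add_left, hpa, hpb]; ring
    have h1 : charFn p y₁ = ∑ t ∈ S, pairing t y₁ * p t
        + ∑ t ∈ S, (- pairing t y₁) * p (t + g) := by
      rw [charFn, hdecomp (fun x => pairing x y₁ * p x)]
      congr 1
      refine Finset.sum_congr rfl (fun t _ => ?_)
      rw [pairing_add_left, hpg]
      ring
    rw [h1, hsum4 (fun t => pairing t y₁ * p t), hsum4 (fun t => (- pairing t y₁) * p (t + g)),
      pairing_zero_left, hpa, hpb, hpab]
    have e0 := hcoset 0 (zero_mem X₂)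
    have ea := hcoset a haX₂
    have eb := hcoset b hbX₂
    have eab := hcoset (a + b) habX₂
    linarith [hkey]
  -- q's char function vanishes where p's does
  have hqV : ∀ y : G, charFn p y = 0 → charFn q y = 0 := by
    intro y h
    have := hqp y
    rw [h, abs_zero, abs_eq_zero] at this
    exact this
  -- the three remaining characters
  have hy₁mem : y₁ ∈ Finset.univ.filter (fun y => bform g y = 1) :=
    Finset.mem_filter.mpr ⟨Finset.mem_univ _, hgy₁⟩
  have hWcard : ((Finset.univ.filter (fun y => bform g y = 1)).erase y₁).card = 3 := by
    rw [Finset.card_erase_of_mem hy₁mem, card4 g hg0]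
  obtain ⟨w₁, w₂, w₃, h12, h13, h23, hWf⟩ := Finset.card_eq_three.mp hWcard
  have hwprop : ∀ w : G, w ∈ ({w₁, w₂, w₃} : Finset G) → bform g w = 1 ∧ w ≠ y₁ := by
    intro w hw
    rw [← hWf] at hw
    obtain ⟨hne, hmem⟩ := Finset.mem_erase.mp hw
    exact ⟨(Finset.mem_filter.mp hmem).2, hne⟩
  have hw₁ := hwprop w₁ (by simp)
  have hw₂ := hwprop w₂ (by simp)
  have hw₃ := hwprop w₃ (by simp)
  -- the signs
  have hsgn : ∀ w : G, ∃ s : ZMod 2, charFn q w = (-1:ℝ)^s.val * charFn p w := by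
    intro w
    rcases abs_eq_abs.mp (hqp w) with h | h
    · exact ⟨0, by rw [h]; norm_num⟩
    · exact ⟨1, by rw [h, ZMod.val_one]; ring⟩
  obtain ⟨s₁, hs₁⟩ := hsgn w₁
  obtain ⟨s₂, hs₂⟩ := hsgn w₂
  obtain ⟨s₃, hs₃⟩ := hsgn w₃
  -- construct the shift x
  obtain ⟨x₁, hx₁a, hx₁b, hx₁c⟩ := lemD0 g w₁ hw₁.1 w₂ hw₂.1 h12 w₃ hw₃.1 h13 h23
  obtain ⟨x₂, hx₂a, hx₂b, hx₂c⟩ := lemD0 g w₂ hw₂.1 w₁ hw₁.1 (Ne.symm h12) w₃ hw₃.1 h23 h13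
  obtain ⟨x₃, hx₃a, hx₃b, hx₃c⟩ := lemD0 g w₃ hw₃.1 w₁ hw₁.1 (Ne.symm h13) w₂ hw₂.1 (Ne.symm h23) h12
  refine ⟨(if s₁ = 1 then x₁ else 0) + ((if s₂ = 1 then x₂ else 0) + (if s₃ = 1 then x₃ else 0)),
    fun e => ?_⟩
  set x : G := (if s₁ = 1 then x₁ else 0) + ((if s₂ = 1 then x₂ else 0) + (if s₃ = 1 then x₃ else 0)) with hxdef
  have hbx : bform x w₁ = s₁ ∧ bform x w₂ = s₂ ∧ bform x w₃ = s₃ := by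
    rw [hxdef]
    rcases zmod2cases s₁ with rfl | rfl <;> rcases zmod2cases s₂ with rfl | rfl <;>
      rcases zmod2cases s₃ with rfl | rfl <;>
      simp [bform_add_left, bform_zero_left, hx₁a, hx₁b, hx₁c, hx₂a, hx₂b, hx₂c,
        hx₃a, hx₃b, hx₃c, show (0 : ZMod 2) ≠ 1 by decide]
  -- the match of characteristic functions
  have hmatch : ∀ y : G, charFn q y = pairing x y * charFn p y := by
    intro y
    rcases eq_or_ne y 0 with rfl | hy0
    · rw [charFn_zero_eq_one q hq.2, charFn_zero_eq_one p hp.2, pairing_zero_right]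
      norm_num
    · rcases zmod2cases (bform g y) with hgy | hgy
      · rw [hV1 y hy0 hgy, hqV y (hV1 y hy0 hgy)]
        ring
      · rcases eq_or_ne y y₁ with rfl | hyy₁
        · rw [hV2, hqV y hV2]
          ring
        · have hyW : y ∈ ({w₁, w₂, w₃} : Finset G) := by
            rw [← hWf]
            exact Finset.mem_erase.mpr ⟨hyy₁,
              Finset.mem_filter.mpr ⟨Finset.mem_univ _, hgy⟩⟩
          simp only [Finset.mem_insert, Finset.mem_singleton] at hyW
          rcases hyW with rfl | rfl | rfl
          · rw [hs₁, pairing_eq, hbx.1]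
          · rw [hs₂, pairing_eq, hbx.2.1]
          · rw [hs₃, pairing_eq, hbx.2.2]
  -- conclude by Fourier inversion
  have h8q := sum_pairing_mul q e
  have h8p := sum_pairing_mul p (e + x)
  have hsame : ∑ y : G, pairing e y * charFn q y = ∑ y : G, pairing (e + x) y * charFn p y := by
    refine Finset.sum_congr rfl (fun y _ => ?_)
    rw [hmatch y]
    simp only [pairing_add_left]
    ring
  rw [hsame, h8p] at h8q
  linarith
end

section
/- Let μ be a probability measure on G = (ℤ/2ℤ)³. If max_{x∈G} μ({x}) > 5/6, then μ ∈ TEC(G). -/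
open scoped BigOperators

/- ### Auxiliary material for the proof of `stmt9` -/

/-- Integer version of the pairing, for decidable computations. -/
def pairingZ (x y : G) : ℤ :=
  (-1 : ℤ) ^ (x.1.val * y.1.val + x.2.1.val * y.2.1.val + x.2.2.val * y.2.2.val)

lemma pairing_eq_cast (x y : G) : pairing x y = (pairingZ x y : ℝ) := by
  simp [pairing, pairingZ]

lemma pairing_mul_left (x z y : G) : pairing x y * pairing z y = pairing (x + z) y := by
  have h : ∀ x z y : G, pairingZ x y * pairingZ z y = pairingZ (x + z) y := by decide
  rw [pairing_eq_cast, pairing_eq_cast, pairing_eq_cast, ← Int.cast_mul, h]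

lemma pairing_mul_right (x y z : G) : pairing x y * pairing x z = pairing x (y + z) := by
  have h : ∀ x y z : G, pairingZ x y * pairingZ x z = pairingZ x (y + z) := by decide
  rw [pairing_eq_cast, pairing_eq_cast, pairing_eq_cast, ← Int.cast_mul, h]

lemma sum_pairing_left (y : G) : ∑ x : G, pairing x y = if y = 0 then 8 else 0 := by
  have h : ∀ y : G, (∑ x : G, pairingZ x y) = if y = 0 then 8 else 0 := by decide
  simp only [pairing_eq_cast]
  rw [← Int.cast_sum, h]
  split <;> norm_num

lemma sum_pairing_right (x : G) : ∑ y : G, pairing x y = if x = 0 then 8 else 0 := by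
  have h : ∀ x : G, (∑ y : G, pairingZ x y) = if x = 0 then 8 else 0 := by decide
  simp only [pairing_eq_cast]
  rw [← Int.cast_sum, h]
  split <;> norm_num

lemma pairing_pm (x y : G) : pairing x y = 1 ∨ pairing x y = -1 := by
  unfold pairing
  rcases Nat.even_or_odd (x.1.val * y.1.val + x.2.1.val * y.2.1.val + x.2.2.val * y.2.2.val)
    with h | h
  · exact Or.inl h.neg_one_pow
  · exact Or.inr h.neg_one_pow

lemma G_add_add (e z : G) : e + (e + z) = z := by revert e z; decide

lemma G_add_eq_zero (a b : G) : a + b = 0 ↔ b = a := by revert a b; decide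

lemma charFn_zero_eq (r : G → ℝ) : charFn r 0 = ∑ x : G, r x := by
  simp [charFn, pairing_zero_right]

/-- Fourier inversion on `G`. -/
lemma inversion (r : G → ℝ) (e : G) : ∑ y : G, pairing e y * charFn r y = 8 * r e := by
  calc ∑ y : G, pairing e y * charFn r y
      = ∑ y : G, ∑ x : G, pairing e y * (pairing x y * r x) := by
        simp only [charFn, Finset.mul_sum]
    _ = ∑ x : G, ∑ y : G, pairing e y * (pairing x y * r x) := Finset.sum_comm
    _ = ∑ x : G, (∑ y : G, pairing (e + x) y) * r x := by
        refine Finset.sum_congr rfl fun x _ => ?_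
        rw [Finset.sum_mul]
        refine Finset.sum_congr rfl fun y _ => ?_
        rw [← mul_assoc, pairing_mul_left]
    _ = 8 * r e := by
        simp only [sum_pairing_right, G_add_eq_zero]
        simp [ite_mul]

/-- Corollary 1: if `max_{x∈G} μ({x}) > 5/6`, then `μ ∈ TEC(G)`. -/
theorem stmt9 (p : G → ℝ) (hp : IsProb p)
    (hbig : 5/6 < uOf p Set.univ) :
    TEC p := by
  intro q hq habs
  -- the big atom
  obtain ⟨a, -, ha⟩ : ∃ a ∈ Set.univ, p a = uOf p Set.univ := by
    have hfin : (p '' Set.univ).Finite := Set.finite_univ.image p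
    have hne : (p '' Set.univ).Nonempty :=
      ⟨p 0, Set.mem_image_of_mem _ (Set.mem_univ 0)⟩
    obtain ⟨x, hx, hx'⟩ := hne.csSup_mem hfin
    exact ⟨x, hx, hx'⟩
  rw [← ha] at hbig
  -- sign function and Fourier coefficients
  set ε : G → ℝ := fun y => if charFn q y = charFn p y then 1 else -1 with hεdef
  have hε : ∀ y, charFn q y = ε y * charFn p y := by
    intro y
    by_cases h : charFn q y = charFn p y
    · simp [hεdef, h]
    · rcases abs_eq_abs.mp (habs y) with h' | h'
      · exact absurd h' h
      · have hm : ε y = -1 := by simp [hεdef, h]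
        rw [hm, h']; ring
  have hεpm : ∀ y, ε y = 1 ∨ ε y = -1 := by
    intro y; by_cases h : charFn q y = charFn p y <;> simp [hεdef, h]
  have hε0 : ε 0 = 1 := by
    have : charFn q 0 = charFn p 0 := by
      rw [charFn_zero_eq, charFn_zero_eq, hp.2, hq.2]
    simp [hεdef, this]
  set d : G → ℝ := fun x => (∑ y : G, ε y * pairing x y) / 8 with hddef
  -- each term ε y * pairing x y is ±1
  have hspm : ∀ x y : G, ε y * pairing x y = 1 ∨ ε y * pairing x y = -1 := by
    intro x y
    rcases hεpm y with h1 | h1 <;> rcases pairing_pm x y with h2 | h2 <;>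
      simp [h1, h2]
  -- key identity: q e = ∑_z d (e+z) * p z
  have hkey : ∀ e : G, q e = ∑ z : G, d (e + z) * p z := by
    intro e
    have h1 : 8 * q e = ∑ y : G, pairing e y * charFn q y := (inversion q e).symm
    have h2 : ∑ y : G, pairing e y * charFn q y
        = ∑ z : G, (8 * d (e + z)) * p z := by
      calc ∑ y : G, pairing e y * charFn q y
          = ∑ y : G, ∑ z : G, (ε y * pairing (e + z) y) * p z := by
            refine Finset.sum_congr rfl fun y _ => ?_
            rw [hε y]
            simp only [charFn, Finset.mul_sum]
            refine Finset.sum_congr rfl fun z _ => ?_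
            rw [← pairing_mul_left e z y]; ring
        _ = ∑ z : G, ∑ y : G, (ε y * pairing (e + z) y) * p z := Finset.sum_comm
        _ = ∑ z : G, (8 * d (e + z)) * p z := by
            refine Finset.sum_congr rfl fun z _ => ?_
            rw [← Finset.sum_mul, hddef]
            simp only
            congr 1
            field_simp
    have := h1.trans h2
    have h3 : ∑ z : G, (8 * d (e + z)) * p z = 8 * ∑ z : G, d (e + z) * p z := by
      rw [Finset.mul_sum]; refine Finset.sum_congr rfl fun z _ => by ring
    nlinarith [this, h3]
  -- |d x| ≤ 1
  have hd_abs : ∀ x : G, -1 ≤ d x ∧ d x ≤ 1 := by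
    intro x
    have hub : ∑ y : G, ε y * pairing x y ≤ ∑ y : G, (1 : ℝ) :=
      Finset.sum_le_sum fun y _ => by rcases hspm x y with h | h <;> rw [h] <;> norm_num
    have hlb : ∑ y : G, (-1 : ℝ) ≤ ∑ y : G, ε y * pairing x y :=
      Finset.sum_le_sum fun y _ => by rcases hspm x y with h | h <;> rw [h] <;> norm_num
    have hcard : Fintype.card G = 8 := by decide
    simp only [Finset.sum_const, Finset.card_univ, hcard, nsmul_eq_mul,
      Nat.cast_ofNat, mul_one, mul_neg] at hub hlb
    constructor
    · rw [hddef]; simp only; linarith [hlb]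
    · rw [hddef]; simp only; linarith [hub]
  -- lower bound p a * d x ≥ p a - 1
  have hdlow : ∀ x : G, p a - 1 ≤ p a * d x := by
    intro x
    have he : q (x + a) = ∑ z : G, d (x + a + z) * p z := hkey (x + a)
    have hsplit : ∑ z : G, d (x + a + z) * p z
        = d (x + a + a) * p a + ∑ z ∈ Finset.univ.erase a, d (x + a + z) * p z := by
      rw [← Finset.add_sum_erase _ _ (Finset.mem_univ a)]
    have hxa : x + a + a = x := by
      rw [add_assoc]
      rw [(G_add_eq_zero a a).mpr rfl, add_zero]
    have hrest : ∑ z ∈ Finset.univ.erase a, d (x + a + z) * p z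
        ≤ ∑ z ∈ Finset.univ.erase a, p z := by
      refine Finset.sum_le_sum fun z _ => ?_
      have := (hd_abs (x + a + z)).2
      nlinarith [hp.1 z]
    have hsum_erase : ∑ z ∈ Finset.univ.erase a, p z = 1 - p a := by
      have h := Finset.add_sum_erase Finset.univ p (Finset.mem_univ a)
      rw [hp.2] at h
      linarith
    have hq0 : 0 ≤ q (x + a) := hq.1 (x + a)
    rw [he, hsplit, hxa] at hq0
    have : d x * p a + (1 - p a) ≥ 0 := by linarith [hrest, hsum_erase ▸ hrest]
    nlinarith [this]
  -- nonnegativity of d via integrality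
  have hdnn : ∀ x : G, 0 ≤ d x := by
    intro x
    set T : Finset G := Finset.univ.filter (fun y => ε y * pairing x y = 1) with hT
    have hsum : ∑ y : G, ε y * pairing x y = 2 * (T.card : ℝ) - 8 := by
      have h1 : ∑ y : G, ε y * pairing x y
          = ∑ y : G, (if ε y * pairing x y = 1 then (1:ℝ) else -1) := by
        refine Finset.sum_congr rfl fun y _ => ?_
        rcases hspm x y with h | h <;> rw [h] <;> norm_num
      have hcc := Finset.card_filter_add_card_filter_not
        (s := (Finset.univ : Finset G)) (p := fun y => ε y * pairing x y = 1)
      have hcard : Fintype.card G = 8 := by decide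
      rw [Finset.card_univ, hcard] at hcc
      have h2 : T.card
          + (Finset.univ.filter (fun y => ¬ ε y * pairing x y = 1)).card = 8 := by
        rw [hT]; exact hcc
      have h2' : (T.card : ℝ)
          + ((Finset.univ.filter (fun y => ¬ ε y * pairing x y = 1)).card : ℝ) = 8 := by
        exact_mod_cast h2
      rw [h1, Finset.sum_ite, Finset.sum_const, Finset.sum_const]
      simp only [nsmul_eq_mul, mul_one, mul_neg]
      rw [show Finset.univ.filter (fun y => ε y * pairing x y = 1) = T from hT.symm]
      linarith
    have hcard4 : (4 : ℝ) ≤ (T.card : ℝ) := by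
      by_contra hlt
      push_neg at hlt
      have hTn : T.card ≤ 3 := by exact_mod_cast Nat.lt_succ_iff.mp (by exact_mod_cast hlt)
      have hTr : (T.card : ℝ) ≤ 3 := by exact_mod_cast hTn
      have hdx : d x ≤ -1/4 := by
        rw [hddef]; simp only
        rw [hsum]; linarith
      have := hdlow x
      nlinarith
    rw [hddef]; simp only
    rw [hsum]; linarith
  -- sum of d is 1
  have hdsum : ∑ x : G, d x = 1 := by
    have : ∑ x : G, ∑ y : G, ε y * pairing x y = 8 := by
      rw [Finset.sum_comm]
      have : ∀ y : G, ∑ x : G, ε y * pairing x y = ε y * (if y = 0 then 8 else 0) := by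
        intro y; rw [← Finset.mul_sum, sum_pairing_left]
      simp only [this, mul_ite, mul_zero]
      rw [Finset.sum_ite_eq' Finset.univ (0 : G) (fun y => ε y * 8)]
      simp [hε0]
    rw [hddef]
    simp only
    rw [← Finset.sum_div, this]
    norm_num
  -- sum of squares of d is 1
  have hdsq : ∑ x : G, d x ^ 2 = 1 := by
    have key : ∑ x : G, (∑ y : G, ε y * pairing x y) ^ 2 = 64 := by
      have expand : ∀ x : G, (∑ y : G, ε y * pairing x y) ^ 2
          = ∑ y : G, ∑ y' : G, (ε y * ε y') * pairing x (y + y') := by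
        intro x
        rw [sq, Finset.sum_mul_sum]
        refine Finset.sum_congr rfl fun y _ => Finset.sum_congr rfl fun y' _ => ?_
        rw [← pairing_mul_right x y y']; ring
      simp only [expand]
      rw [Finset.sum_comm]
      have h1 : ∀ y : G, ∑ x : G, ∑ y' : G, (ε y * ε y') * pairing x (y + y')
          = ∑ y' : G, (ε y * ε y') * (if y + y' = 0 then (8:ℝ) else 0) := by
        intro y
        rw [Finset.sum_comm]
        refine Finset.sum_congr rfl fun y' _ => ?_
        rw [← Finset.mul_sum, sum_pairing_left]
      simp only [h1, G_add_eq_zero, mul_ite, mul_zero]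
      have h2 : ∀ y : G, ∑ y' : G, (if y' = y then ε y * ε y' * 8 else 0)
          = ε y * ε y * 8 := by
        intro y
        rw [Finset.sum_ite_eq' Finset.univ y (fun y' => ε y * ε y' * 8)]
        simp
      simp only [h2]
      have h3 : ∀ y : G, ε y * ε y * 8 = 8 := by
        intro y; rcases hεpm y with h | h <;> rw [h] <;> norm_num
      simp only [h3]
      simp only [Finset.sum_const, Finset.card_univ, nsmul_eq_mul]
      norm_num [show Fintype.card G = 8 from by decide]
    have : ∑ x : G, d x ^ 2 = (∑ x : G, (∑ y : G, ε y * pairing x y) ^ 2) / 64 := by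
      rw [Finset.sum_div]
      refine Finset.sum_congr rfl fun x _ => ?_
      rw [hddef]; simp only
      ring
    rw [this, key]; norm_num
  -- hence each d x ∈ {0, 1}
  have hd01 : ∀ x : G, d x = 0 ∨ d x = 1 := by
    have hle1 : ∀ x : G, d x ≤ 1 := by
      intro x
      have := Finset.single_le_sum (f := d) (fun i _ => hdnn i) (Finset.mem_univ x)
      linarith [hdsum ▸ this]
    have hzero : ∑ x : G, d x * (1 - d x) = 0 := by
      have : ∑ x : G, d x * (1 - d x) = ∑ x : G, d x - ∑ x : G, d x ^ 2 := by
        rw [← Finset.sum_sub_distrib]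
        refine Finset.sum_congr rfl fun x _ => by ring
      rw [this, hdsum, hdsq]; ring
    intro x
    have hterm : d x * (1 - d x) = 0 := by
      have hnn : ∀ i ∈ Finset.univ, 0 ≤ d i * (1 - d i) := fun i _ =>
        mul_nonneg (hdnn i) (by linarith [hle1 i])
      exact (Finset.sum_eq_zero_iff_of_nonneg hnn).mp hzero x (Finset.mem_univ x)
    rcases mul_eq_zero.mp hterm with h | h
    · exact Or.inl h
    · exact Or.inr (by linarith)
  -- get the unique point where d = 1
  obtain ⟨x₀, hx₀⟩ : ∃ x₀ : G, d x₀ = 1 := by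
    by_contra h
    push_neg at h
    have : ∀ x : G, d x = 0 := fun x => (hd01 x).resolve_right (h x)
    rw [Finset.sum_congr rfl fun x _ => this x] at hdsum
    simp at hdsum
  have hdx : ∀ x : G, x ≠ x₀ → d x = 0 := by
    intro x hx
    have hsplit := Finset.add_sum_erase Finset.univ d (Finset.mem_univ x₀)
    rw [hdsum] at hsplit
    have h0 : ∑ z ∈ Finset.univ.erase x₀, d z = 0 := by linarith [hx₀ ▸ hsplit]
    have := (Finset.sum_eq_zero_iff_of_nonneg
      (fun i _ => hdnn i)).mp h0 x (Finset.mem_erase.mpr ⟨hx, Finset.mem_univ x⟩)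
    exact this
  -- conclude
  refine ⟨x₀, fun e => ?_⟩
  rw [hkey e]
  rw [Finset.sum_eq_single (e + x₀)]
  · rw [G_add_add, hx₀, one_mul]
  · intro z _ hz
    have : e + z ≠ x₀ := by
      intro hc
      apply hz
      rw [← hc, G_add_add]
    rw [hdx (e + z) this, zero_mul]
  · intro h
    exact absurd (Finset.mem_univ _) h
end
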